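/- arXiv:2006.05334 — 2 statements merged into one kernel-verified Lean document; each statement's English description precedes it below -/
import Mathlib

section
/- Let s be an infinite equivalence class of the relation on S_V ⊆ ℚ given by 'finitely many elements of S_V strictly between'. Then s is discrete: for each r ∈ s there exists a positive rational δ such that the open interval (r − δ, r + δ) contains no element of s other than r. -/
/-- Only finitely many elements of `S_V` lie strictly between `a` and `b`. -/
def BtwFin (S_V : Set ℚ) (a b : ℚ) : Prop :=
  {x : ℚ | x ∈ S_V ∧ min a b < x ∧ x < max a b}.Finite

lemma btwFin_trans (S_V : Set ℚ) (a r x : ℚ) (h1 : BtwFin S_V a r)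
    (h2 : BtwFin S_V a x) :
    {y : ℚ | y ∈ S_V ∧ min r x < y ∧ y < max r x}.Finite := by
  apply Set.Finite.subset ((h1.union h2).union (Set.finite_singleton a))
  rintro y ⟨hyS, hlt, hgt⟩
  rcases lt_trichotomy y a with hya | hya | hya
  · rcases min_lt_iff.mp hlt with h | h
    · exact Or.inl (Or.inl ⟨hyS, lt_of_le_of_lt (min_le_right a r) h,
        lt_of_lt_of_le hya (le_max_left a r)⟩)
    · exact Or.inl (Or.inr ⟨hyS, lt_of_le_of_lt (min_le_right a x) h,
        lt_of_lt_of_le hya (le_max_left a x)⟩)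
  · exact Or.inr (by simp [hya])
  · rcases lt_max_iff.mp hgt with h | h
    · exact Or.inl (Or.inl ⟨hyS, lt_of_le_of_lt (min_le_left a r) hya,
        lt_of_lt_of_le h (le_max_right a r)⟩)
    · exact Or.inl (Or.inr ⟨hyS, lt_of_le_of_lt (min_le_left a x) hya,
        lt_of_lt_of_le h (le_max_right a x)⟩)

lemma right_bound (S_V : Set ℚ) (a r : ℚ) (hr : BtwFin S_V a r) :
    ∃ δ : ℚ, 0 < δ ∧ ∀ x, x ∈ S_V → BtwFin S_V a x → r < x → r + δ ≤ x := by
  by_cases h : ∃ x, x ∈ S_V ∧ BtwFin S_V a x ∧ r < x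
  · obtain ⟨x₀, hS, hb, hrx⟩ := h
    have hfin : ({y : ℚ | y ∈ S_V ∧ min r x₀ < y ∧ y < max r x₀} ∪ {x₀}).Finite :=
      (btwFin_trans S_V a r x₀ hr hb).union (Set.finite_singleton x₀)
    obtain ⟨b, hbF, hmin⟩ := Set.exists_min_image _ id hfin ⟨x₀, Or.inr rfl⟩
    have hrb : r < b := by
      rcases hbF with ⟨_, h1, _⟩ | h1
      · rw [min_eq_left hrx.le] at h1; exact h1
      · simp only [Set.mem_singleton_iff] at h1; linarith [h1 ▸ hrx]
    refine ⟨b - r, by linarith, ?_⟩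
    intro x hxS hxb hx
    rcases lt_or_ge x x₀ with hx0 | hx0
    · have hmem : x ∈ {y : ℚ | y ∈ S_V ∧ min r x₀ < y ∧ y < max r x₀} ∪ {x₀} :=
        Or.inl ⟨hxS, by rw [min_eq_left hrx.le]; exact hx,
          by rw [max_eq_right hrx.le]; exact hx0⟩
      have := hmin x hmem
      simp only [id] at this
      linarith
    · have := hmin x₀ (Or.inr rfl)
      simp only [id] at this
      linarith
  · push_neg at h
    exact ⟨1, one_pos, fun x hxS hxb hx => absurd hx (not_lt.mpr (h x hxS hxb))⟩

lemma left_bound (S_V : Set ℚ) (a r : ℚ) (hr : BtwFin S_V a r) :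
    ∃ δ : ℚ, 0 < δ ∧ ∀ x, x ∈ S_V → BtwFin S_V a x → x < r → x ≤ r - δ := by
  by_cases h : ∃ x, x ∈ S_V ∧ BtwFin S_V a x ∧ x < r
  · obtain ⟨x₀, hS, hb, hrx⟩ := h
    have hfin : ({y : ℚ | y ∈ S_V ∧ min r x₀ < y ∧ y < max r x₀} ∪ {x₀}).Finite :=
      (btwFin_trans S_V a r x₀ hr hb).union (Set.finite_singleton x₀)
    obtain ⟨b, hbF, hmax⟩ := Set.exists_max_image _ id hfin ⟨x₀, Or.inr rfl⟩
    have hrb : b < r := by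
      rcases hbF with ⟨_, _, h1⟩ | h1
      · rw [max_eq_left hrx.le] at h1; exact h1
      · simp only [Set.mem_singleton_iff] at h1; linarith [h1 ▸ hrx]
    refine ⟨r - b, by linarith, ?_⟩
    intro x hxS hxb hx
    rcases lt_or_ge x₀ x with hx0 | hx0
    · have hmem : x ∈ {y : ℚ | y ∈ S_V ∧ min r x₀ < y ∧ y < max r x₀} ∪ {x₀} :=
        Or.inl ⟨hxS, by rw [min_eq_right hrx.le]; exact hx0,
          by rw [max_eq_left hrx.le]; exact hx⟩
      have := hmax x hmem
      simp only [id] at this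
      linarith
    · have := hmax x₀ (Or.inr rfl)
      simp only [id] at this
      linarith
  · push_neg at h
    exact ⟨1, one_pos, fun x hxS hxb hx => absurd hx (not_lt.mpr (h x hxS hxb))⟩

/-- An infinite equivalence class `s` of the relation "finitely many elements of `S_V`
strictly between" is discrete: each of its points `r` is isolated, i.e. some interval
`(r - δ, r + δ)` with `δ > 0` meets `s` only in `r`. -/
theorem infinite_class_discrete (S_V : Set ℚ) (a : ℚ) (ha : a ∈ S_V)
    (hinf : {b : ℚ | b ∈ S_V ∧ BtwFin S_V a b}.Infinite)
    (r : ℚ) (hr : r ∈ S_V ∧ BtwFin S_V a r) :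
    ∃ δ : ℚ, 0 < δ ∧
      ∀ x : ℚ, (x ∈ S_V ∧ BtwFin S_V a x) → r - δ < x → x < r + δ → x = r := by
  obtain ⟨δ₁, hδ₁, h₁⟩ := right_bound S_V a r hr.2
  obtain ⟨δ₂, hδ₂, h₂⟩ := left_bound S_V a r hr.2
  refine ⟨min δ₁ δ₂, lt_min hδ₁ hδ₂, ?_⟩
  rintro x ⟨hxS, hxb⟩ hlo hhi
  rcases lt_trichotomy x r with h | h | h
  · have := h₂ x hxS hxb h
    have := min_le_right δ₁ δ₂
    linarith
  · exact h
  · have := h₁ x hxS hxb h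
    have := min_le_left δ₁ δ₂
    linarith
end

section
/- Let A and B be countable dense subsets of ℚ such that both A and ℚ \ A are dense in ℚ, and both B and ℚ \ B are dense in ℚ. Then there exists an order automorphism α of (ℚ, ≤) with α(A) = B. -/
/-- `U` is a dense subset of `(ℚ, ≤)`: every open interval contains a point of `U`. -/
def DenseIn (U : Set ℚ) : Prop := ∀ a b : ℚ, a < b → ∃ c ∈ U, a < c ∧ c < b

namespace BackForth

open Order

theorem exists_between_finsets_mem {S : Set ℚ} (hS : DenseIn S) (lo hi : Finset ℚ)
    (lo_lt_hi : ∀ x ∈ lo, ∀ y ∈ hi, x < y) :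
    ∃ m ∈ S, (∀ x ∈ lo, x < m) ∧ ∀ y ∈ hi, m < y := by
  rcases lo.eq_empty_or_nonempty with rfl | nlo
  · rcases hi.eq_empty_or_nonempty with rfl | nhi
    · obtain ⟨c, hc, -, -⟩ := hS 0 1 one_pos
      exact ⟨c, hc, by simp, by simp⟩
    · obtain ⟨c, hc, -, h2⟩ := hS (hi.min' nhi - 1) (hi.min' nhi) (by linarith)
      exact ⟨c, hc, by simp, fun y hy => lt_of_lt_of_le h2 (hi.min'_le y hy)⟩
  · rcases hi.eq_empty_or_nonempty with rfl | nhi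
    · obtain ⟨c, hc, h1, -⟩ := hS (lo.max' nlo) (lo.max' nlo + 1) (by linarith)
      exact ⟨c, hc, fun x hx => lt_of_le_of_lt (lo.le_max' x hx) h1, by simp⟩
    · obtain ⟨c, hc, h1, h2⟩ := hS (lo.max' nlo) (hi.min' nhi)
        (lo_lt_hi _ (lo.max'_mem nlo) _ (hi.min'_mem nhi))
      exact ⟨c, hc, fun x hx => lt_of_le_of_lt (lo.le_max' x hx) h1,
        fun y hy => lt_of_lt_of_le h2 (hi.min'_le y hy)⟩

/-- Finite partial order isomorphisms of `ℚ` respecting membership in `A` vs `B`. -/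
def PIso (A B : Set ℚ) : Type :=
  { f : Finset (ℚ × ℚ) //
    (∀ p ∈ f, ∀ q ∈ f, cmp (Prod.fst p) (Prod.fst q) = cmp (Prod.snd p) (Prod.snd q)) ∧
    ∀ p ∈ f, (Prod.fst p ∈ A ↔ Prod.snd p ∈ B) }

namespace PIso

variable {A B : Set ℚ}

instance : Inhabited (PIso A B) := ⟨⟨∅, by simp, by simp⟩⟩

instance : Preorder (PIso A B) := Subtype.preorder _

theorem exists_across (hB : DenseIn B) (hBc : DenseIn Bᶜ) (f : PIso A B) (a : ℚ) :
    ∃ b : ℚ, (a ∈ A ↔ b ∈ B) ∧ ∀ p ∈ f.val, cmp (Prod.fst p) a = cmp (Prod.snd p) b := by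
  classical
  by_cases h : ∃ b, (a, b) ∈ f.val
  · obtain ⟨b, hb⟩ := h
    exact ⟨b, f.prop.2 _ hb, fun p hp => f.prop.1 _ hp _ hb⟩
  have key : ∀ x ∈ (f.val.filter fun p : ℚ × ℚ => p.1 < a).image Prod.snd,
      ∀ y ∈ (f.val.filter fun p : ℚ × ℚ => a < p.1).image Prod.snd, x < y := by
    intro x hx y hy
    rw [Finset.mem_image] at hx hy
    rcases hx with ⟨p, hp1, rfl⟩
    rcases hy with ⟨q, hq1, rfl⟩
    rw [Finset.mem_filter] at hp1 hq1
    rw [← lt_iff_lt_of_cmp_eq_cmp (f.prop.1 _ hp1.1 _ hq1.1)]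
    exact lt_trans hp1.2 hq1.2
  have hS : DenseIn (if a ∈ A then B else Bᶜ) := by split <;> assumption
  obtain ⟨b, hbS, hb1, hb2⟩ := exists_between_finsets_mem hS _ _ key
  refine ⟨b, ?_, ?_⟩
  · by_cases ha : a ∈ A
    · rw [if_pos ha] at hbS; exact iff_of_true ha hbS
    · rw [if_neg ha] at hbS; exact iff_of_false ha hbS
  rintro ⟨p1, p2⟩ hp
  have hne : p1 ≠ a := fun he => h ⟨p2, he ▸ hp⟩
  rcases lt_or_gt_of_ne hne with hl | hr
  · have hthis : p1 < a ∧ p2 < b :=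
      ⟨hl, hb1 _ (Finset.mem_image.mpr ⟨(p1, p2), Finset.mem_filter.mpr ⟨hp, hl⟩, rfl⟩)⟩
    rw [← cmp_eq_lt_iff, ← cmp_eq_lt_iff] at hthis
    exact hthis.1.trans hthis.2.symm
  · have hthis : a < p1 ∧ b < p2 :=
      ⟨hr, hb2 _ (Finset.mem_image.mpr ⟨(p1, p2), Finset.mem_filter.mpr ⟨hp, hr⟩, rfl⟩)⟩
    rw [← cmp_eq_gt_iff, ← cmp_eq_gt_iff] at hthis
    exact hthis.1.trans hthis.2.symm

/-- Swap the two sides of a partial isomorphism. -/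
def comm (f : PIso A B) : PIso B A := by
  refine ⟨f.val.image Prod.swap, ?_, ?_⟩
  · intro p hp q hq
    rw [Finset.mem_image] at hp hq
    obtain ⟨p', hp', rfl⟩ := hp
    obtain ⟨q', hq', rfl⟩ := hq
    exact (f.prop.1 _ hp' _ hq').symm
  · intro p hp
    rw [Finset.mem_image] at hp
    obtain ⟨p', hp', rfl⟩ := hp
    exact (f.prop.2 _ hp').symm

theorem mem_comm (f : PIso A B) (a b : ℚ) : (b, a) ∈ f.comm.val ↔ (a, b) ∈ f.val := by
  simp only [comm, Finset.mem_image, Prod.ext_iff, Prod.swap]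
  constructor
  · rintro ⟨⟨x, y⟩, h, rfl, rfl⟩; exact h
  · intro h; exact ⟨(a, b), h, rfl, rfl⟩

/-- Cofinal set of partial isos defined at `a` on the left. -/
def definedAtLeft (hB : DenseIn B) (hBc : DenseIn Bᶜ) (a : ℚ) :
    Cofinal (PIso A B) where
  carrier := {f | ∃ b : ℚ, (a, b) ∈ f.val}
  isCofinal f := by
    obtain ⟨b, hiff, a_b⟩ := exists_across hB hBc f a
    refine ⟨⟨insert (a, b) f.val, ?_, ?_⟩, ⟨b, Finset.mem_insert_self _ _⟩,
      Finset.subset_insert _ _⟩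
    · intro p hp q hq
      rw [Finset.mem_insert] at hp hq
      rcases hp with rfl | pf <;> rcases hq with rfl | qf
      · simp only [cmp_self_eq_eq]
      · rw [cmp_eq_cmp_symm]; exact a_b _ qf
      · exact a_b _ pf
      · exact f.prop.1 _ pf _ qf
    · intro p hp
      rw [Finset.mem_insert] at hp
      rcases hp with rfl | pf
      · exact hiff
      · exact f.prop.2 _ pf

/-- Cofinal set of partial isos defined at `b` on the right. -/
def definedAtRight (hA : DenseIn A) (hAc : DenseIn Aᶜ) (b : ℚ) :
    Cofinal (PIso A B) where
  carrier := {f | ∃ a : ℚ, (a, b) ∈ f.val}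
  isCofinal f := by
    obtain ⟨f', ⟨a, ha⟩, hl⟩ := (definedAtLeft hA hAc b).isCofinal f.comm
    refine ⟨f'.comm, ⟨a, ?_⟩, ?_⟩
    · rw [mem_comm]; exact ha
    · intro p hp
      rw [← Prod.swap_swap p, mem_comm]
      exact hl (by rw [← mem_comm] at hp; exact hp)
  
end PIso

end BackForth

/-- If `A` and `B` are (countable) subsets of `ℚ` such that `A`, `ℚ \ A`, `B` and
`ℚ \ B` are all dense in `ℚ`, then some order automorphism of `(ℚ, ≤)` maps `A` onto
`B`. -/
theorem exists_orderAut_image_eq (A B : Set ℚ)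
    (hA : DenseIn A) (hAc : DenseIn Aᶜ) (hB : DenseIn B) (hBc : DenseIn Bᶜ) :
    ∃ α : ℚ ≃o ℚ, (⇑α) '' A = B := by
  classical
  open BackForth BackForth.PIso in
  let to_cofinal : ℚ ⊕ ℚ → Order.Cofinal (PIso A B) := fun p =>
    Sum.recOn p (definedAtLeft hB hBc) (definedAtRight hA hAc)
  let our_ideal : Order.Ideal (PIso A B) := Order.idealOfCofinals default to_cofinal
  have hF : ∀ a : ℚ, ∃ b : ℚ, ∃ f ∈ our_ideal, (a, b) ∈ f.val := by
    intro a
    obtain ⟨f, ⟨b, hb⟩, hf⟩ := Order.cofinal_meets_idealOfCofinals default to_cofinal (Sum.inl a)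
    exact ⟨b, f, hf, hb⟩
  have hG : ∀ b : ℚ, ∃ a : ℚ, ∃ f ∈ our_ideal, (a, b) ∈ f.val := by
    intro b
    obtain ⟨f, ⟨a, ha⟩, hf⟩ := Order.cofinal_meets_idealOfCofinals default to_cofinal (Sum.inr b)
    exact ⟨a, f, hf, ha⟩
  choose F hFf using hF
  choose G hGg using hG
  have hcmp : ∀ (a b : ℚ), cmp a (G b) = cmp (F a) b := by
    intro a b
    obtain ⟨f, hf, ha⟩ := hFf a
    obtain ⟨g, hg, hb⟩ := hGg b
    obtain ⟨m, _, fm, gm⟩ := our_ideal.directed _ hf _ hg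
    exact m.prop.1 (a, _) (fm ha) (_, b) (gm hb)
  refine ⟨OrderIso.ofCmpEqCmp F G hcmp, ?_⟩
  have hmem : ∀ a : ℚ, a ∈ A ↔ F a ∈ B := by
    intro a
    obtain ⟨f, _, ha⟩ := hFf a
    exact f.prop.2 _ ha
  set α := OrderIso.ofCmpEqCmp F G hcmp with hα
  have hαF : ∀ a, α a = F a := fun a => rfl
  ext b
  constructor
  · rintro ⟨a, ha, rfl⟩
    rw [hαF]
    exact (hmem a).mp ha
  · intro hb
    refine ⟨α.symm b, ?_, α.apply_symm_apply b⟩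
    have := hmem (α.symm b)
    rw [← hαF, α.apply_symm_apply] at this
    exact this.mpr hb
end
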